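/- Let h > 0, α ∈ (0,1), j ≥ 1 an integer, t_k = kh, and L_0(t) = f_0 (t² − 3ht + 2h²)/(2h²) − f_1 (t² − 2ht)/h² + f_2 (t² − ht)/(2h²). Then ∫_{t_0}^{t_1} L_0'(τ) (t_j − τ)^{−α} dτ = h^{−α} [ (f_2 − 2f_1 + f_0)/((1−α)(2−α)) · (j^{2−α} − (j−1)^{2−α}) − (f_2 − 4f_1 + 3f_0)/(2−2α) · j^{1−α} − (f_2 − f_0)/(2(1−α)) · (j−1)^{1−α} ]. -/

import Mathlib

open Real

private lemma helper_combo (u v P Q X Y : ℝ) (hP : P ≠ 0) (hQ : Q ≠ 0) :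
    u / P * (-1 * P * (X * Y)) - v / Q * (-1 * Q * X) = (v - u * Y) * X := by
  field_simp
  ring

set_option maxHeartbeats 1000000 in
theorem integral_L0_deriv (α h f0 f1 f2 : ℝ) (hα : α ∈ Set.Ioo (0:ℝ) 1) (hh : 0 < h)
    (j : ℕ) (hj : 1 ≤ j) :
    let L0 : ℝ → ℝ := fun t =>
      f0 * (t ^ 2 - 3 * h * t + 2 * h ^ 2) / (2 * h ^ 2)
        - f1 * (t ^ 2 - 2 * h * t) / h ^ 2
        + f2 * (t ^ 2 - h * t) / (2 * h ^ 2)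
    (∫ τ in (0:ℝ)..h, deriv L0 τ * ((j : ℝ) * h - τ) ^ (-α)) =
      h ^ (-α) *
        ((f2 - 2 * f1 + f0) / ((1 - α) * (2 - α)) *
            ((j : ℝ) ^ (2 - α) - ((j : ℝ) - 1) ^ (2 - α))
          - (f2 - 4 * f1 + 3 * f0) / (2 - 2 * α) * (j : ℝ) ^ (1 - α)
          - (f2 - f0) / (2 * (1 - α)) * ((j : ℝ) - 1) ^ (1 - α)) := by
  intro L0
  obtain ⟨hα0, hα1⟩ := hα
  have hhne : h ≠ 0 := hh.ne'
  have h1α : (0:ℝ) < 1 - α := by linarith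
  have h2α : (0:ℝ) < 2 - α := by linarith
  set A : ℝ := (f0 - 2*f1 + f2) / h^2 with hA
  set B : ℝ := (4*f1 - 3*f0 - f2) / (2*h) with hB
  set c : ℝ := (j:ℝ) * h with hc
  have hjr : (1:ℝ) ≤ (j:ℝ) := by exact_mod_cast hj
  have hhc : h ≤ c := by
    rw [hc]; nlinarith
  -- derivative of L0
  have hL0eq : L0 = fun t => A/2 * t^2 + B * t + f0 := by
    funext t
    simp only [L0, hA, hB]
    field_simp
    ring
  have hLd : ∀ τ : ℝ, HasDerivAt L0 (A * τ + B) τ := by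
    intro τ
    rw [hL0eq]
    have h1 : HasDerivAt (fun t : ℝ => A/2 * t^2 + B * t + f0)
        (A/2 * (2 * τ^1) + B * 1) τ := by
      exact (((hasDerivAt_pow 2 τ).const_mul (A/2)).add ((hasDerivAt_id τ).const_mul B)).add_const f0
    convert h1 using 1
    ring
  -- rewrite the integrand
  have hint_eq : (∫ τ in (0:ℝ)..h, deriv L0 τ * ((j : ℝ) * h - τ) ^ (-α))
      = ∫ τ in (0:ℝ)..h, (A * τ + B) * (c - τ) ^ (-α) := by
    apply intervalIntegral.integral_congr
    intro τ _
    show deriv L0 τ * ((j : ℝ) * h - τ) ^ (-α) = (A * τ + B) * (c - τ) ^ (-α)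
    rw [(hLd τ).deriv, hc]
  -- integrability
  have hInt : IntervalIntegrable (fun τ => (A * τ + B) * (c - τ) ^ (-α)) MeasureTheory.volume 0 h := by
    have h1 : IntervalIntegrable (fun x : ℝ => x ^ (-α)) MeasureTheory.volume c (c - h) :=
      intervalIntegral.intervalIntegrable_rpow' (by linarith)
    have h2 := h1.comp_sub_left c
    simp only [sub_self, sub_sub_cancel] at h2
    exact h2.continuousOn_mul (by fun_prop)
  -- antiderivative
  set F : ℝ → ℝ := fun τ => A/(2-α) * (c - τ) ^ (2 - α) - (A*c+B)/(1-α) * (c - τ) ^ (1 - α) with hF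
  have hFcont : ContinuousOn F (Set.Icc 0 h) := by
    apply Continuous.continuousOn
    apply Continuous.sub
    · exact continuous_const.mul ((continuous_const.sub continuous_id).rpow_const
        (fun x => Or.inr h2α.le))
    · exact continuous_const.mul ((continuous_const.sub continuous_id).rpow_const
        (fun x => Or.inr h1α.le))
  have hFderiv : ∀ τ ∈ Set.Ioo (0:ℝ) h, HasDerivAt F ((A * τ + B) * (c - τ) ^ (-α)) τ := by
    intro τ hτ
    have hcτ : 0 < c - τ := by
      have := hτ.2; linarith
    have hd2 : HasDerivAt (fun x : ℝ => (c - x) ^ (2 - α))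
        (-1 * (2 - α) * (c - τ) ^ (2 - α - 1)) τ := by
      have := ((hasDerivAt_id τ).const_sub c).rpow_const (p := 2 - α) (Or.inl hcτ.ne')
      simpa using this
    have hd1 : HasDerivAt (fun x : ℝ => (c - x) ^ (1 - α))
        (-1 * (1 - α) * (c - τ) ^ (1 - α - 1)) τ := by
      have := ((hasDerivAt_id τ).const_sub c).rpow_const (p := 1 - α) (Or.inl hcτ.ne')
      simpa using this
    have hd := (hd2.const_mul (A/(2-α))).sub (hd1.const_mul ((A*c+B)/(1-α)))
    refine hd.congr_deriv ?_
    have e1 : (2:ℝ) - α - 1 = 1 - α := by ring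
    have e2 : (1:ℝ) - α - 1 = -α := by ring
    rw [e1, e2,
      show (c-τ)^((1:ℝ)-α) = (c-τ)^(-α) * (c-τ) from by
        rw [show (1:ℝ)-α = -α+1 by ring, Real.rpow_add_one hcτ.ne'],
      helper_combo A (A*c+B) (2-α) (1-α) ((c-τ)^(-α)) (c-τ) h2α.ne' h1α.ne']
    ring
  have hFTC := intervalIntegral.integral_eq_sub_of_hasDerivAt_of_le hh.le hFcont hFderiv hInt
  rw [hint_eq, hFTC]
  -- now evaluate F h - F 0
  have hch : c - h = ((j:ℝ) - 1) * h := by rw [hc]; ring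
  have hj1 : (0:ℝ) ≤ (j:ℝ) - 1 := by linarith
  have hp2 : h ^ ((2:ℝ) - α) = h^2 * h^(-α) := by
    rw [show (2:ℝ) - α = ((2:ℕ):ℝ) + (-α) by push_cast; ring, Real.rpow_add hh,
      Real.rpow_natCast]
  have hp1 : h ^ ((1:ℝ) - α) = h * h^(-α) := by
    rw [show (1:ℝ) - α = ((1:ℕ):ℝ) + (-α) by push_cast; ring, Real.rpow_add hh,
      Real.rpow_natCast, pow_one]
  have aux : ∀ x : ℝ, 0 ≤ x → x ^ ((2:ℝ) - α) = x * x ^ ((1:ℝ) - α) := by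
    intro x hx
    rcases hx.eq_or_lt with hx0 | hx0
    · rw [← hx0, Real.zero_rpow h2α.ne', Real.zero_rpow h1α.ne', mul_zero]
    · rw [show (2:ℝ) - α = (1 - α) + 1 by ring, Real.rpow_add_one hx0.ne']
      ring
  simp only [hF, hch, sub_zero]
  rw [hc]
  rw [Real.mul_rpow hj1 hh.le, Real.mul_rpow hj1 hh.le,
    Real.mul_rpow (Nat.cast_nonneg j) hh.le, Real.mul_rpow (Nat.cast_nonneg j) hh.le,
    hp1, hp2, aux _ hj1, aux _ (Nat.cast_nonneg j), hA, hB]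
  generalize ((j:ℝ) - 1) ^ ((1:ℝ) - α) = W
  generalize ((j:ℝ)) ^ ((1:ℝ) - α) = U
  generalize h ^ (-α) = H
  have h22 : (2:ℝ) - 2*α ≠ 0 := by intro hx; apply h1α.ne'; linarith
  field_simp [h22]
  ring
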